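/- Let (α|β) be a partition of length at most p and with first part at most q, and let m ≥ 0. Then dim F^(p)_{(α+m|β)} · dim F^(q)_{(β+m|α)} = dim F^(p+m)_{(α|β+m)} · dim F^(q+m)_{(β|α+m)}, where dim F^(n)_π = Π_{u ∈ π} (n + c(u)) / h(u) is the dimension of the irreducible gl_n-module with highest weight π (equivalently, the number of semistandard Young tableaux of shape π with entries at most n). -/

import Mathlib

open Finset

namespace DimAux

noncomputable def P (x : ℚ) (n : ℕ) : ℚ := ∏ t ∈ Finset.range n, (x + t)

lemma P_add (x : ℚ) (a b : ℕ) : P x (a + b) = P x a * P (x + a) b := by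
  rw [P, Finset.prod_range_add]
  congr 1
  refine Finset.prod_congr rfl fun t _ => ?_
  push_cast
  ring

lemma P_rev (x : ℚ) (n : ℕ) : (∏ t ∈ Finset.range n, (x - t)) = P (x - n + 1) n := by
  rw [P, ← Finset.prod_range_reflect (fun j => x - (n:ℚ) + 1 + j) n]
  refine Finset.prod_congr rfl fun t ht => ?_
  rw [Finset.mem_range] at ht
  have h1 : ((n - 1 - t : ℕ) : ℚ) = (n : ℚ) - 1 - t := by
    rw [Nat.cast_sub (by omega), Nat.cast_sub (by omega)]
    push_cast
    ring
  simp only [h1]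
  ring

lemma filter_min_eq (ν : YoungDiagram) (i : ℕ) :
    ν.cells.filter (fun u => min u.1 u.2 = i) =
      ((Finset.Ico i (ν.rowLen i)).image fun j => (i, j)) ∪
        ((Finset.Ico (i + 1) (ν.colLen i)).image fun j => (j, i)) := by
  ext ⟨a, b⟩
  simp only [Finset.mem_filter, YoungDiagram.mem_cells, Finset.mem_union, Finset.mem_image,
    Finset.mem_Ico, Prod.mk.injEq]
  constructor
  · rintro ⟨hmem, hmin⟩
    rcases le_or_gt a b with hab | hba
    · have ha : a = i := by omega
      subst ha
      exact Or.inl ⟨b, ⟨by omega, YoungDiagram.mem_iff_lt_rowLen.mp hmem⟩, rfl, rfl⟩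
    · have hb : b = i := by omega
      subst hb
      exact Or.inr ⟨a, ⟨by omega, YoungDiagram.mem_iff_lt_colLen.mp hmem⟩, rfl, rfl⟩
  · rintro (⟨j, ⟨hj1, hj2⟩, rfl, rfl⟩ | ⟨j, ⟨hj1, hj2⟩, rfl, rfl⟩)
    · exact ⟨YoungDiagram.mem_iff_lt_rowLen.mpr hj2, by omega⟩
    · exact ⟨YoungDiagram.mem_iff_lt_colLen.mpr hj2, by omega⟩

lemma prod_cells (ν : YoungDiagram) {r : ℕ} (hr : ∀ i, (i, i) ∈ ν ↔ i < r) (f : ℕ × ℕ → ℚ) :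
    ∏ u ∈ ν.cells, f u =
      ∏ i ∈ Finset.range r,
        ((∏ j ∈ Finset.Ico i (ν.rowLen i), f (i, j)) *
          ∏ j ∈ Finset.Ico (i + 1) (ν.colLen i), f (j, i)) := by
  have hmaps : ∀ u ∈ ν.cells, min u.1 u.2 ∈ Finset.range r := by
    intro u hu
    rw [Finset.mem_range]
    refine (hr _).mp (ν.up_left_mem (min_le_left u.1 u.2) (min_le_right u.1 u.2) ?_)
    simpa using hu
  rw [← Finset.prod_fiberwise_of_maps_to hmaps f]
  refine Finset.prod_congr rfl fun i _ => ?_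
  rw [filter_min_eq]
  have hdisj : Disjoint ((Finset.Ico i (ν.rowLen i)).image fun j => (i, j))
      ((Finset.Ico (i + 1) (ν.colLen i)).image fun j => ((j : ℕ), i)) := by
    rw [Finset.disjoint_left]
    rintro ⟨a, b⟩ h1 h2
    simp only [Finset.mem_image, Finset.mem_Ico, Prod.mk.injEq] at h1 h2
    obtain ⟨j, hj, rfl, rfl⟩ := h1
    obtain ⟨k, hk, hk1, rfl⟩ := h2
    omega
  rw [Finset.prod_union hdisj, Finset.prod_image (by intro x _ y _ h; simpa using h),
    Finset.prod_image (by intro x _ y _ h; simpa using h)]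

lemma hook_prod (ν : YoungDiagram) {r : ℕ} (a b : ℕ → ℕ)
    (hr : ∀ i, (i, i) ∈ ν ↔ i < r)
    (ha : ∀ i < r, ν.rowLen i = a i + i + 1)
    (hb : ∀ i < r, ν.colLen i = b i + i + 1) (x : ℚ) :
    ∏ u ∈ ν.cells, (x + ((u.2 : ℚ) - (u.1 : ℚ))) =
      ∏ i ∈ Finset.range r, P (x - b i) (b i + (a i + 1)) := by
  rw [prod_cells ν hr]
  refine Finset.prod_congr rfl fun i hi => ?_
  rw [Finset.mem_range] at hi
  rw [ha i hi, hb i hi]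
  have harm : ∏ j ∈ Finset.Ico i (a i + i + 1), (x + ((j : ℚ) - (i : ℚ))) = P x (a i + 1) := by
    rw [show a i + i + 1 = i + (a i + 1) by omega, Finset.prod_Ico_eq_prod_range,
      Nat.add_sub_cancel_left, P]
    refine Finset.prod_congr rfl fun t _ => ?_
    push_cast
    ring
  have hleg : ∏ j ∈ Finset.Ico (i + 1) (b i + i + 1), (x + ((i : ℚ) - (j : ℚ)))
      = P (x - b i) (b i) := by
    rw [show b i + i + 1 = (i + 1) + b i by omega, Finset.prod_Ico_eq_prod_range,
      Nat.add_sub_cancel_left]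
    have hcongr : ∀ t ∈ Finset.range (b i), (x + ((i : ℚ) - ((i + 1 + t : ℕ) : ℚ)))
        = (x - 1) - t := by
      intro t _
      push_cast
      ring
    rw [Finset.prod_congr rfl hcongr, P_rev]
    congr 1
    ring
  rw [harm, hleg]
  conv_rhs => rw [P_add]
  rw [show x - (b i : ℚ) + (b i : ℚ) = x by ring, mul_comm]

lemma hookD_transpose (ν : YoungDiagram) :
    ∏ u ∈ ν.transpose.cells,
        ((ν.transpose.rowLen u.1 + ν.transpose.colLen u.2 - u.1 - u.2 - 1 : ℕ) : ℚ)
      = ∏ u ∈ ν.cells, ((ν.rowLen u.1 + ν.colLen u.2 - u.1 - u.2 - 1 : ℕ) : ℚ) := by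
  have hc : ν.transpose.cells = ν.cells.map (Equiv.prodComm ℕ ℕ).toEmbedding := rfl
  rw [hc, Finset.prod_map]
  refine Finset.prod_congr rfl fun u _ => ?_
  simp only [Equiv.coe_toEmbedding, Equiv.prodComm_apply, Prod.fst_swap, Prod.snd_swap,
    YoungDiagram.rowLen_transpose, YoungDiagram.colLen_transpose]
  congr 1
  omega

lemma mem_char (ν : YoungDiagram) {r : ℕ} (hr : ∀ i, (i, i) ∈ ν ↔ i < r) (a b : ℕ) :
    (a, b) ∈ ν ↔ (a < r ∧ a ≤ b ∧ b < ν.rowLen a) ∨ (b < r ∧ b < a ∧ a < ν.colLen b) := by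
  constructor
  · intro h
    have hm : min a b < r :=
      (hr _).mp (ν.up_left_mem (min_le_left a b) (min_le_right a b) h)
    rcases le_or_gt a b with hab | hba
    · exact Or.inl ⟨by omega, hab, YoungDiagram.mem_iff_lt_rowLen.mp h⟩
    · exact Or.inr ⟨by omega, hba, YoungDiagram.mem_iff_lt_colLen.mp h⟩
  · rintro (⟨_, _, h⟩ | ⟨_, _, h⟩)
    · exact YoungDiagram.mem_iff_lt_rowLen.mpr h
    · exact YoungDiagram.mem_iff_lt_colLen.mpr h

lemma frob_ext (ν₁ ν₂ : YoungDiagram) {r : ℕ}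
    (h1 : ∀ i, (i, i) ∈ ν₁ ↔ i < r) (h2 : ∀ i, (i, i) ∈ ν₂ ↔ i < r)
    (hrow : ∀ i < r, ν₁.rowLen i = ν₂.rowLen i)
    (hcol : ∀ i < r, ν₁.colLen i = ν₂.colLen i) : ν₁ = ν₂ := by
  ext ⟨a, b⟩
  simp only [YoungDiagram.mem_cells]
  rw [mem_char ν₁ h1, mem_char ν₂ h2]
  constructor
  · rintro (⟨h1', h2', h3'⟩ | ⟨h1', h2', h3'⟩)
    · exact Or.inl ⟨h1', h2', by rwa [← hrow a h1']⟩
    · exact Or.inr ⟨h1', h2', by rwa [← hcol b h1']⟩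
  · rintro (⟨h1', h2', h3'⟩ | ⟨h1', h2', h3'⟩)
    · exact Or.inl ⟨h1', h2', by rwa [hrow a h1']⟩
    · exact Or.inr ⟨h1', h2', by rwa [hcol b h1']⟩

end DimAux

/-- The dimension of the irreducible gl_N-module with highest weight the partition μ,
given by the hook content formula: Π_{u ∈ μ} (N + c(u)) / h(u). -/
noncomputable def dimF (N : ℕ) (μ : YoungDiagram) : ℚ :=
  ∏ u ∈ μ.cells,
    ((N : ℚ) + ((u.2 : ℚ) - (u.1 : ℚ))) /
      ((μ.rowLen u.1 + μ.colLen u.2 - u.1 - u.2 - 1 : ℕ) : ℚ)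

/-- Let λ = (α|β) be a partition of length at most p with first part at
most q, and m ≥ 0.  With μ₁ = (α+m|β), μ₂ = (β+m|α), μ₃ = (α|β+m), μ₄ = (β|α+m)
(Frobenius coordinates, 0-indexed as in the hypotheses), we have
dim F^(p)_{(α+m|β)} · dim F^(q)_{(β+m|α)} = dim F^(p+m)_{(α|β+m)} · dim F^(q+m)_{(β|α+m)}. -/
theorem dim_product_identity (p q m r : ℕ) (α β : ℕ → ℕ)
    (μ μ₁ μ₂ μ₃ μ₄ : YoungDiagram)
    (hlen : μ.colLen 0 ≤ p) (hwidth : μ.rowLen 0 ≤ q)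
    (hr : ∀ i : ℕ, (i, i) ∈ μ ↔ i < r)
    (hα : ∀ i < r, μ.rowLen i = α i + i + 1)
    (hβ : ∀ i < r, μ.colLen i = β i + i + 1)
    (hr₁ : ∀ i : ℕ, (i, i) ∈ μ₁ ↔ i < r)
    (hα₁ : ∀ i < r, μ₁.rowLen i = (α i + m) + i + 1)
    (hβ₁ : ∀ i < r, μ₁.colLen i = β i + i + 1)
    (hr₂ : ∀ i : ℕ, (i, i) ∈ μ₂ ↔ i < r)
    (hα₂ : ∀ i < r, μ₂.rowLen i = (β i + m) + i + 1)
    (hβ₂ : ∀ i < r, μ₂.colLen i = α i + i + 1)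
    (hr₃ : ∀ i : ℕ, (i, i) ∈ μ₃ ↔ i < r)
    (hα₃ : ∀ i < r, μ₃.rowLen i = α i + i + 1)
    (hβ₃ : ∀ i < r, μ₃.colLen i = (β i + m) + i + 1)
    (hr₄ : ∀ i : ℕ, (i, i) ∈ μ₄ ↔ i < r)
    (hα₄ : ∀ i < r, μ₄.rowLen i = β i + i + 1)
    (hβ₄ : ∀ i < r, μ₄.colLen i = (α i + m) + i + 1) :
    dimF p μ₁ * dimF q μ₂ = dimF (p + m) μ₃ * dimF (q + m) μ₄ := by
  have e3 : μ₃ = μ₂.transpose :=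
    DimAux.frob_ext μ₃ μ₂.transpose hr₃
      (fun i => by rw [YoungDiagram.mem_transpose]; simpa using hr₂ i)
      (fun i hi => by rw [hα₃ i hi, YoungDiagram.rowLen_transpose, hβ₂ i hi])
      (fun i hi => by rw [hβ₃ i hi, YoungDiagram.colLen_transpose, hα₂ i hi])
  have e4 : μ₄ = μ₁.transpose :=
    DimAux.frob_ext μ₄ μ₁.transpose hr₄
      (fun i => by rw [YoungDiagram.mem_transpose]; simpa using hr₁ i)
      (fun i hi => by rw [hα₄ i hi, YoungDiagram.rowLen_transpose, hβ₁ i hi])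
      (fun i hi => by rw [hβ₄ i hi, YoungDiagram.colLen_transpose, hα₁ i hi])
  have dsplit : ∀ (N : ℕ) (ν : YoungDiagram), dimF N ν =
      (∏ u ∈ ν.cells, ((N : ℚ) + ((u.2 : ℚ) - (u.1 : ℚ)))) /
        (∏ u ∈ ν.cells, ((ν.rowLen u.1 + ν.colLen u.2 - u.1 - u.2 - 1 : ℕ) : ℚ)) := by
    intro N ν
    rw [dimF, Finset.prod_div_distrib]
  have n1 := DimAux.hook_prod μ₁ (fun i => α i + m) β hr₁ hα₁ hβ₁ (p : ℚ)
  have n2 := DimAux.hook_prod μ₂ (fun i => β i + m) α hr₂ hα₂ hβ₂ (q : ℚ)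
  have n3 := DimAux.hook_prod μ₃ α (fun i => β i + m) hr₃ hα₃ hβ₃ ((p + m : ℕ) : ℚ)
  have n4 := DimAux.hook_prod μ₄ β (fun i => α i + m) hr₄ hα₄ hβ₄ ((q + m : ℕ) : ℚ)
  have e13 : (∏ u ∈ μ₃.cells, (((p + m : ℕ) : ℚ) + ((u.2 : ℚ) - (u.1 : ℚ))))
      = ∏ u ∈ μ₁.cells, ((p : ℚ) + ((u.2 : ℚ) - (u.1 : ℚ))) := by
    rw [n1, n3]
    refine Finset.prod_congr rfl fun i _ => ?_
    rw [show ((p + m : ℕ) : ℚ) - ((β i + m : ℕ) : ℚ) = (p : ℚ) - ((β i : ℕ) : ℚ) by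
      push_cast; ring]
    congr 1
    omega
  have e24 : (∏ u ∈ μ₄.cells, (((q + m : ℕ) : ℚ) + ((u.2 : ℚ) - (u.1 : ℚ))))
      = ∏ u ∈ μ₂.cells, ((q : ℚ) + ((u.2 : ℚ) - (u.1 : ℚ))) := by
    rw [n2, n4]
    refine Finset.prod_congr rfl fun i _ => ?_
    rw [show ((q + m : ℕ) : ℚ) - ((α i + m : ℕ) : ℚ) = (q : ℚ) - ((α i : ℕ) : ℚ) by
      push_cast; ring]
    congr 1
    omega
  have d3 : (∏ u ∈ μ₃.cells, ((μ₃.rowLen u.1 + μ₃.colLen u.2 - u.1 - u.2 - 1 : ℕ) : ℚ))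
      = ∏ u ∈ μ₂.cells, ((μ₂.rowLen u.1 + μ₂.colLen u.2 - u.1 - u.2 - 1 : ℕ) : ℚ) := by
    rw [e3]
    exact DimAux.hookD_transpose μ₂
  have d4 : (∏ u ∈ μ₄.cells, ((μ₄.rowLen u.1 + μ₄.colLen u.2 - u.1 - u.2 - 1 : ℕ) : ℚ))
      = ∏ u ∈ μ₁.cells, ((μ₁.rowLen u.1 + μ₁.colLen u.2 - u.1 - u.2 - 1 : ℕ) : ℚ) := by
    rw [e4]
    exact DimAux.hookD_transpose μ₁
  rw [dsplit p μ₁, dsplit q μ₂, dsplit (p + m) μ₃, dsplit (q + m) μ₄, e13, e24, d3, d4]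
  ring
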